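/- Let G be a linearly ordered abelian group with finite spines which is not divisible (i.e., pG ≠ G for some prime p). Then there exists a prime p such that pG ≠ G and G is not p-antiregular; that is, either there is a convex subgroup H ⊊ G such that the quotient G/H is p-divisible (equivalently, G = H + pG), or there is a convex subgroup H ⊊ G such that the quotient G/H, linearly ordered by a + H < b + H iff a < b and b − a ∉ H, is archimedean (for all x, y ∈ G/H with 0 < x there is n ∈ ℕ with y < n·x). -/

import Mathlib

/-- `nH = {n • h : h ∈ H}` as a subgroup. -/
def smulSub {G : Type*} [AddCommGroup G] (n : ℕ) (H : AddSubgroup G) : AddSubgroup G :=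
  AddSubgroup.map (n • AddMonoidHom.id G) H

/-- A subgroup `H` of a linearly ordered abelian group is convex if
`0 ≤ g ≤ h` and `h ∈ H` imply `g ∈ H`. -/
def IsConvexSubgroup {G : Type*} [AddCommGroup G] [LinearOrder G] [IsOrderedAddMonoid G] (H : AddSubgroup G) : Prop :=
  ∀ g h : G, 0 ≤ g → g ≤ h → h ∈ H → g ∈ H

/-- `H_p(a)`: the largest convex subgroup `H` of `G` with `a ∉ H + pG` (equivalently the
union, i.e. supremum, of all such subgroups); it is the trivial subgroup when `a ∈ pG`. -/
def Hsub {G : Type*} [AddCommGroup G] [LinearOrder G] [IsOrderedAddMonoid G] (p : ℕ) (a : G) : AddSubgroup G :=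
  sSup {H : AddSubgroup G | IsConvexSubgroup H ∧ a ∉ H ⊔ smulSub p ⊤}

section Aux

variable {G : Type*} [AddCommGroup G] [LinearOrder G] [IsOrderedAddMonoid G]

lemma conv_mem_of_abs_le {H : AddSubgroup G} (hc : IsConvexSubgroup H) {g h : G}
    (hle : |g| ≤ |h|) (hh : h ∈ H) : g ∈ H := by
  have habs : |h| ∈ H := by
    rcases abs_choice h with e | e
    · rwa [e]
    · rw [e]; exact H.neg_mem hh
  have hg : |g| ∈ H := hc _ _ (abs_nonneg g) hle habs
  rcases abs_choice g with e | e
  · rwa [← e]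
  · have h2 : -g ∈ H := by rwa [← e]
    simpa using H.neg_mem h2

lemma conv_comparable {H K : AddSubgroup G} (hH : IsConvexSubgroup H)
    (hK : IsConvexSubgroup K) : H ≤ K ∨ K ≤ H := by
  by_cases h : H ≤ K
  · exact Or.inl h
  · right
    obtain ⟨h0, hH0, hK0⟩ := SetLike.not_le_iff_exists.mp h
    intro k hk
    rcases le_total |k| |h0| with hle | hle
    · exact conv_mem_of_abs_le hH hle hH0
    · exact absurd (conv_mem_of_abs_le hK hle hk) hK0

lemma bot_convex : IsConvexSubgroup (⊥ : AddSubgroup G) := by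
  intro g h hg hgh hh
  simp only [AddSubgroup.mem_bot] at hh ⊢
  subst hh
  exact le_antisymm hgh hg

lemma mem_Hsub_iff {p : ℕ} {a : G} (ha : a ∉ smulSub p ⊤) {x : G} :
    x ∈ Hsub p a ↔ ∃ H : AddSubgroup G,
      (IsConvexSubgroup H ∧ a ∉ H ⊔ smulSub p ⊤) ∧ x ∈ H := by
  have hbot : (⊥ : AddSubgroup G) ∈
      {H : AddSubgroup G | IsConvexSubgroup H ∧ a ∉ H ⊔ smulSub p ⊤} := by
    refine ⟨bot_convex, ?_⟩
    rwa [bot_sup_eq]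
  have hdir : DirectedOn (fun x1 x2 : AddSubgroup G => x1 ≤ x2)
      {H : AddSubgroup G | IsConvexSubgroup H ∧ a ∉ H ⊔ smulSub p ⊤} := by
    intro A hA B hB
    rcases conv_comparable hA.1 hB.1 with h | h
    · exact ⟨B, hB, h, le_rfl⟩
    · exact ⟨A, hA, le_rfl, h⟩
  rw [Hsub, AddSubgroup.mem_sSup_of_directedOn ⟨⊥, hbot⟩ hdir]
  simp only [Set.mem_setOf_eq]

lemma Hsub_convex {p : ℕ} {a : G} (ha : a ∉ smulSub p ⊤) :
    IsConvexSubgroup (Hsub p a) := by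
  intro g h hg hgh hh
  rw [mem_Hsub_iff ha] at hh ⊢
  obtain ⟨H, hH, hmem⟩ := hh
  exact ⟨H, hH, hH.1 _ _ hg hgh hmem⟩

lemma not_mem_Hsub_sup {p : ℕ} {a : G} (ha : a ∉ smulSub p ⊤) :
    a ∉ Hsub p a ⊔ smulSub p ⊤ := by
  intro hmem
  rw [AddSubgroup.mem_sup] at hmem
  obtain ⟨y, hy, z, hz, hyz⟩ := hmem
  rw [mem_Hsub_iff ha] at hy
  obtain ⟨H, ⟨hHc, hHa⟩, hyH⟩ := hy
  exact hHa (AddSubgroup.mem_sup.mpr ⟨y, hyH, z, hz, hyz⟩)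

end Aux

/-- Let `G` be a non-divisible linearly ordered abelian group with finite spines.  Then
there is a prime `p` with `pG ≠ G` such that `G` is not `p`-antiregular: either some
quotient `G/H` by a convex subgroup `H ⊊ G` is `p`-divisible (i.e. `G = H + pG`), or some
quotient `G/H` by a convex subgroup `H ⊊ G` is archimedean (for all `x, y ∈ G/H` with
`0 < x` there is `m : ℕ` with `y < m • x`; positivity and strict inequality in `G/H` are
expressed on representatives: `0 < x + H` iff `0 < x` and `x ∉ H`, and
`y + H < z + H` iff `y < z` and `z - y ∉ H`). -/
theorem exists_prime_not_antiregular {G : Type*} [AddCommGroup G] [LinearOrder G] [IsOrderedAddMonoid G]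
    (hfs : ∀ q : ℕ, q.Prime → {H : AddSubgroup G | ∃ a : G, H = Hsub q a}.Finite)
    (hnd : ∃ q : ℕ, q.Prime ∧ smulSub q (⊤ : AddSubgroup G) ≠ ⊤) :
    ∃ p : ℕ, p.Prime ∧ smulSub p (⊤ : AddSubgroup G) ≠ ⊤ ∧
      ((∃ H : AddSubgroup G, IsConvexSubgroup H ∧ H ≠ ⊤ ∧ H ⊔ smulSub p ⊤ = ⊤) ∨
        (∃ H : AddSubgroup G, IsConvexSubgroup H ∧ H ≠ ⊤ ∧
          ∀ x y : G, 0 < x → x ∉ H → ∃ m : ℕ, y < m • x ∧ m • x - y ∉ H)) := by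
  obtain ⟨p, hp, hpG⟩ := hnd
  refine ⟨p, hp, hpG, ?_⟩
  by_contra hcon
  push_neg at hcon
  obtain ⟨hdiv, harch⟩ := hcon
  -- the set of Hsub p a for a ∉ pG
  set T : Set (AddSubgroup G) :=
    {H : AddSubgroup G | ∃ a : G, a ∉ smulSub p ⊤ ∧ H = Hsub p a} with hT
  have hTfin : T.Finite := by
    refine (hfs p hp).subset ?_
    rintro H ⟨a, _, rfl⟩
    exact ⟨a, rfl⟩
  have hTne : T.Nonempty := by
    have : ∃ b : G, b ∉ smulSub p (⊤ : AddSubgroup G) := by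
      by_contra h
      push_neg at h
      exact hpG ((AddSubgroup.eq_top_iff' _).mpr h)
    obtain ⟨b, hb⟩ := this
    exact ⟨Hsub p b, b, hb, rfl⟩
  obtain ⟨H, ⟨a, ha, rfl⟩, hmax⟩ : ∃ H ∈ T, ∀ a' ∈ T, id H ≤ id a' → id H = id a' := by
    obtain ⟨H, hH⟩ := Set.Finite.exists_maximal hTfin hTne
    exact ⟨H, hH.1, fun a' ha' hle => le_antisymm hle (hH.2 ha' hle)⟩
  have hHc : IsConvexSubgroup (Hsub p a) := Hsub_convex ha
  have hHsup : a ∉ Hsub p a ⊔ smulSub p ⊤ := not_mem_Hsub_sup ha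
  have hHne : Hsub p a ≠ ⊤ := by
    intro h
    exact hHsup (AddSubgroup.mem_sup_left (h ▸ AddSubgroup.mem_top a))
  -- G/H is not archimedean: get x, y
  obtain ⟨x, y, hx, hxH, hxy⟩ := harch (Hsub p a) hHc hHne
  -- elements of H are < x in absolute value
  have hHlt : ∀ h ∈ Hsub p a, |h| < x := by
    intro h hh
    by_contra hle
    push_neg at hle
    exact hxH (hHc _ _ hx.le hle (by
      rcases abs_choice h with e | e
      · rwa [e] at *
      · rw [e]; exact (Hsub p a).neg_mem hh))
  -- the convex subgroup generated by x (and H)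
  set K : AddSubgroup G :=
    { carrier := {g : G | ∃ n : ℕ, |g| ≤ n • x}
      zero_mem' := ⟨0, by simp⟩
      add_mem' := by
        rintro g g' ⟨n, hn⟩ ⟨n', hn'⟩
        exact ⟨n + n', (abs_add_le g g').trans (by rw [add_nsmul]; exact add_le_add hn hn')⟩
      neg_mem' := by
        rintro g ⟨n, hn⟩
        exact ⟨n, by rwa [abs_neg]⟩ } with hK
  have hKmem : ∀ g : G, g ∈ K ↔ ∃ n : ℕ, |g| ≤ n • x := fun g => Iff.rfl
  have hKc : IsConvexSubgroup K := by
    intro g h hg hgh hh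
    obtain ⟨n, hn⟩ := (hKmem h).mp hh
    exact (hKmem g).mpr ⟨n, (abs_of_nonneg hg).symm ▸
      (hgh.trans ((le_abs_self h).trans hn))⟩
  have hxK : x ∈ K := ⟨1, by simp [abs_of_pos hx]⟩
  have hHK : Hsub p a ≤ K := fun h hh => ⟨1, by simpa using (hHlt h hh).le⟩
  have hyK : y ∉ K := by
    rintro ⟨n, hn⟩
    have h1 : y < (n + 1) • x := lt_of_le_of_lt ((le_abs_self y).trans hn)
      (nsmul_lt_nsmul_left hx (Nat.lt_succ_self n))
    have h2 : y < (n + 2) • x := h1.trans (nsmul_lt_nsmul_left hx (by omega))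
    have m1 : (n + 1) • x - y ∈ Hsub p a := hxy (n + 1) h1
    have m2 : (n + 2) • x - y ∈ Hsub p a := hxy (n + 2) h2
    have : ((n + 2) • x - y) - ((n + 1) • x - y) ∈ Hsub p a :=
      (Hsub p a).sub_mem m2 m1
    have hxmem : x ∈ Hsub p a := by
      have e : ((n + 2) • x - y) - ((n + 1) • x - y) = x := by
        have : (n + 2) • x = (n + 1) • x + x := by rw [succ_nsmul]
        rw [this]; abel
      rwa [e] at this
    exact hxH hxmem
  have hKne : K ≠ ⊤ := fun h => hyK (h ▸ AddSubgroup.mem_top y)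
  -- K ⊔ pG ≠ ⊤, so pick b outside
  have hKsup : K ⊔ smulSub p ⊤ ≠ ⊤ := fun h => hdiv K hKc hKne h
  have hbex : ∃ b : G, b ∉ K ⊔ smulSub p (⊤ : AddSubgroup G) := by
    by_contra h
    push_neg at h
    exact hKsup ((AddSubgroup.eq_top_iff' _).mpr h)
  obtain ⟨b, hb⟩ := hbex
  have hbp : b ∉ smulSub p ⊤ := fun h => hb (AddSubgroup.mem_sup_right h)
  have hKle : K ≤ Hsub p b := le_sSup ⟨hKc, hb⟩
  have hble : Hsub p a ≤ Hsub p b := hHK.trans hKle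
  have := hmax (Hsub p b) ⟨b, hbp, rfl⟩ hble
  simp only [id] at this
  exact hxH (this ▸ hKle hxK)
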